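/- Let r ≥ 2 be an integer, δ > 0, and define ω₀ = 2^{(r−1)/2} δ^{−(r+1)/2} β_{r−1} ∫_0^{+∞} e^{−x} x^{(r−1)/2} dx, where β_{r−1} = π^{(r−1)/2}/Γ((r−1)/2 + 1). Let V be a real inner product space of dimension r with Lebesgue measure, λ ∈ V* with max_{‖v‖≤1} λ(v) = δ. Then there exists C > 0 such that for all T > 0, |∫_{B_T} e^{λ(v)} dv − ω₀ T^{(r−1)/2} e^{δT}| ≤ C T^{(r−3)/2} e^{δT}, where B_T is the open ball of radius T centered at 0 in V. -/

import Mathlib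

set_option maxHeartbeats 1000000

open MeasureTheory Set
open scoped RealInnerProductSpace


lemma aux_one_sub_rpow (p : ℝ) {u : ℝ} (h0 : 0 ≤ u) (h1 : u ≤ 1) :
    1 - (1 - u) ^ p ≤ max 1 p * u := by
  rcases le_or_gt p 1 with hp1 | hp1
  · have h2 : 1 - u ≤ (1 - u) ^ p := by
      rcases eq_or_lt_of_le h1 with rfl | hlt
      · simpa using Real.rpow_nonneg (by norm_num) p
      · have := Real.rpow_le_rpow_of_exponent_ge (x := 1 - u) (by linarith) (by linarith) hp1
        simpa using this
    have : (1:ℝ) ≤ max 1 p := le_max_left _ _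
    nlinarith
  · have hb := one_add_mul_self_le_rpow_one_add (s := -u) (by linarith) hp1.le
    have : p ≤ max 1 p := le_max_right _ _
    have hru : (1 + -u) = 1 - u := by ring
    rw [hru] at hb
    nlinarith

lemma gamma_integrable (p : ℝ) (hp : 0 < p) :
    IntegrableOn (fun x : ℝ => Real.exp (-x) * x ^ p) (Ioi 0) := by
  have := Real.GammaIntegral_convergent (s := p + 1) (by linarith)
  simpa using this

lemma gamma_value (p : ℝ) (hp : 0 < p) :
    ∫ x in Ioi (0:ℝ), Real.exp (-x) * x ^ p = Real.Gamma (p + 1) := by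
  rw [Real.Gamma_eq_integral (by linarith)]
  simp

lemma J_bound (p δ : ℝ) (hp : 0 < p) (hδ : 0 < δ) :
    ∀ T : ℝ, 0 < T →
      |(∫ x in Ioc 0 (2*δ*T), Real.exp (-x) * x ^ p * (1 - x/(2*δ*T)) ^ p) -
        Real.Gamma (p+1)| ≤ ((max 1 p + 1) * Real.Gamma (p+2) / (2*δ)) / T := by
  intro T hT
  set a := 2*δ*T with ha_def
  have ha : 0 < a := by positivity
  have hint0 : IntegrableOn (fun x : ℝ => Real.exp (-x) * x ^ p) (Ioi 0) :=
    gamma_integrable p hp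
  have hint1 : IntegrableOn (fun x : ℝ => Real.exp (-x) * x ^ (p+1)) (Ioi 0) :=
    gamma_integrable (p+1) (by linarith)
  have hmeas1 : Measurable (fun x : ℝ => Real.exp (-x) * x ^ p * (1 - x/a) ^ p) := by
    fun_prop
  -- integrability of the modified integrand on Ioc 0 a
  have hint2 : IntegrableOn (fun x : ℝ => Real.exp (-x) * x ^ p * (1 - x/a) ^ p) (Ioc 0 a) := by
    refine Integrable.mono (hint0.mono_set Ioc_subset_Ioi_self) hmeas1.aestronglyMeasurable ?_
    filter_upwards [ae_restrict_mem measurableSet_Ioc] with x hx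
    have hx0 : 0 < x := hx.1
    have hxa : x ≤ a := hx.2
    have h1 : 0 ≤ 1 - x/a := by
      rw [sub_nonneg, div_le_one ha]; exact hxa
    have h2 : (1 - x/a) ^ p ≤ 1 :=
      Real.rpow_le_one h1 (by
        have : 0 ≤ x/a := by positivity
        linarith) hp.le
    have hnn : 0 ≤ Real.exp (-x) * x ^ p := by positivity
    rw [Real.norm_eq_abs, Real.norm_eq_abs, abs_of_nonneg hnn,
      abs_of_nonneg (by positivity)]
    nlinarith [Real.rpow_nonneg h1 p]
  have hsplit : (∫ x in Ioi (0:ℝ), Real.exp (-x) * x ^ p) =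
      (∫ x in Ioc 0 a, Real.exp (-x) * x ^ p) + ∫ x in Ioi a, Real.exp (-x) * x ^ p := by
    rw [← setIntegral_union (Ioc_disjoint_Ioi le_rfl) measurableSet_Ioi
      (hint0.mono_set Ioc_subset_Ioi_self)
      (hint0.mono_set (Ioi_subset_Ioi ha.le)), Ioc_union_Ioi_eq_Ioi ha.le]
  have hgam := gamma_value p hp
  -- difference decomposition
  have hdiff : (∫ x in Ioc 0 a, Real.exp (-x) * x ^ p * (1 - x/a) ^ p) - Real.Gamma (p+1)
      = (∫ x in Ioc 0 a, (Real.exp (-x) * x ^ p * (1 - x/a) ^ p - Real.exp (-x) * x ^ p))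
        - ∫ x in Ioi a, Real.exp (-x) * x ^ p := by
    rw [integral_sub hint2 (hint0.mono_set Ioc_subset_Ioi_self), ← hgam, hsplit]
    ring
  rw [hdiff]
  set M := max 1 p with hM
  have hM1 : (1:ℝ) ≤ M := le_max_left _ _
  -- bound for the first piece
  have hb1 : |∫ x in Ioc 0 a, (Real.exp (-x) * x ^ p * (1 - x/a) ^ p - Real.exp (-x) * x ^ p)|
      ≤ (M/a) * Real.Gamma (p+2) := by
    have hle : ∀ x ∈ Ioc (0:ℝ) a,
        |Real.exp (-x) * x ^ p * (1 - x/a) ^ p - Real.exp (-x) * x ^ p|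
        ≤ (M/a) * (Real.exp (-x) * x ^ (p+1)) := by
      intro x hx
      have hx0 : 0 < x := hx.1
      have hxa : x ≤ a := hx.2
      have hu0 : 0 ≤ x/a := by positivity
      have hu1 : x/a ≤ 1 := (div_le_one ha).2 hxa
      have key := aux_one_sub_rpow p hu0 hu1
      have h1 : 0 ≤ 1 - x/a := by linarith
      have h2 : (1 - x/a) ^ p ≤ 1 := Real.rpow_le_one h1 (by linarith) hp.le
      have hnn : 0 ≤ Real.exp (-x) * x ^ p := by positivity
      have heq : Real.exp (-x) * x ^ p * (1 - x/a) ^ p - Real.exp (-x) * x ^ p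
          = -(Real.exp (-x) * x ^ p * (1 - (1 - x/a) ^ p)) := by ring
      rw [heq, abs_neg, abs_of_nonneg (by nlinarith [Real.rpow_nonneg h1 p])]
      have hxp1 : x ^ (p+1) = x ^ p * x := by
        rw [Real.rpow_add hx0, Real.rpow_one]
      rw [hxp1]
      have : Real.exp (-x) * x ^ p * (1 - (1 - x/a) ^ p)
          ≤ Real.exp (-x) * x ^ p * (M * (x/a)) := by
        apply mul_le_mul_of_nonneg_left key hnn
      calc Real.exp (-x) * x ^ p * (1 - (1 - x/a) ^ p)
          ≤ Real.exp (-x) * x ^ p * (M * (x/a)) := this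
        _ = M/a * (Real.exp (-x) * (x ^ p * x)) := by ring
    have habs := norm_integral_le_integral_norm (μ := volume.restrict (Ioc 0 a))
      (fun x => Real.exp (-x) * x ^ p * (1 - x/a) ^ p - Real.exp (-x) * x ^ p)
    rw [Real.norm_eq_abs] at habs
    have hfd : IntegrableOn (fun x : ℝ => |Real.exp (-x) * x ^ p * (1 - x/a) ^ p - Real.exp (-x) * x ^ p|) (Ioc 0 a) :=
      (hint2.sub (hint0.mono_set Ioc_subset_Ioi_self)).abs
    have hgd : IntegrableOn (fun x : ℝ => (M/a) * (Real.exp (-x) * x ^ (p+1))) (Ioc 0 a) :=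
      (hint1.mono_set Ioc_subset_Ioi_self).const_mul _
    have h2 : (∫ x in Ioc 0 a, |Real.exp (-x) * x ^ p * (1 - x/a) ^ p - Real.exp (-x) * x ^ p|)
        ≤ ∫ x in Ioc 0 a, (M/a) * (Real.exp (-x) * x ^ (p+1)) :=
      setIntegral_mono_on hfd hgd measurableSet_Ioc hle
    have h3 : (∫ x in Ioc 0 a, (M/a) * (Real.exp (-x) * x ^ (p+1)))
        ≤ ∫ x in Ioi 0, (M/a) * (Real.exp (-x) * x ^ (p+1)) := by
      apply setIntegral_mono_set (hint1.const_mul _)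
      · filter_upwards [ae_restrict_mem measurableSet_Ioi] with x hx
        have hx0 : (0:ℝ) < x := hx
        positivity
      · exact HasSubset.Subset.eventuallyLE Ioc_subset_Ioi_self
    have h4 : (∫ x in Ioi (0:ℝ), (M/a) * (Real.exp (-x) * x ^ (p+1))) = (M/a) * Real.Gamma (p+2) := by
      rw [integral_const_mul]
      rw [gamma_value (p+1) (by linarith), show p+1+1 = p+2 by ring]
    simp only [Real.norm_eq_abs] at habs
    linarith
  -- bound for the second piece
  have hnb2 : (0:ℝ) ≤ ∫ x in Ioi a, Real.exp (-x) * x ^ p := by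
    apply setIntegral_nonneg measurableSet_Ioi
    intro x hx
    have : (0:ℝ) < x := lt_trans ha hx
    positivity
  have hb2 : (∫ x in Ioi a, Real.exp (-x) * x ^ p) ≤ (1/a) * Real.Gamma (p+2) := by
    have hle : ∀ x ∈ Ioi a, Real.exp (-x) * x ^ p ≤ (1/a) * (Real.exp (-x) * x ^ (p+1)) := by
      intro x hx
      have hx0 : 0 < x := lt_trans ha hx
      have hxp1 : x ^ (p+1) = x ^ p * x := by rw [Real.rpow_add hx0, Real.rpow_one]
      rw [hxp1]
      have h5 : a * (Real.exp (-x) * x ^ p) ≤ x * (Real.exp (-x) * x ^ p) := by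
        apply mul_le_mul_of_nonneg_right (le_of_lt hx) (by positivity)
      rw [div_mul_eq_mul_div, le_div_iff₀ ha]
      nlinarith
    have h2 : (∫ x in Ioi a, Real.exp (-x) * x ^ p)
        ≤ ∫ x in Ioi a, (1/a) * (Real.exp (-x) * x ^ (p+1)) :=
      setIntegral_mono_on (hint0.mono_set (Ioi_subset_Ioi ha.le))
        ((hint1.mono_set (Ioi_subset_Ioi ha.le)).const_mul _) measurableSet_Ioi hle
    have h3 : (∫ x in Ioi a, (1/a) * (Real.exp (-x) * x ^ (p+1)))
        ≤ ∫ x in Ioi 0, (1/a) * (Real.exp (-x) * x ^ (p+1)) := by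
      apply setIntegral_mono_set (hint1.const_mul _)
      · filter_upwards [ae_restrict_mem measurableSet_Ioi] with x hx
        have hx0 : (0:ℝ) < x := hx
        positivity
      · exact HasSubset.Subset.eventuallyLE (Ioi_subset_Ioi ha.le)
    have h4 : (∫ x in Ioi (0:ℝ), (1/a) * (Real.exp (-x) * x ^ (p+1))) = (1/a) * Real.Gamma (p+2) := by
      rw [integral_const_mul]
      rw [gamma_value (p+1) (by linarith), show p+1+1 = p+2 by ring]
    linarith
  have hfinal : (M/a) * Real.Gamma (p+2) + (1/a) * Real.Gamma (p+2)
      = ((M + 1) * Real.Gamma (p+2) / (2*δ)) / T := by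
    rw [ha_def]; field_simp
  calc |(∫ x in Ioc 0 a, (Real.exp (-x) * x ^ p * (1 - x/a) ^ p - Real.exp (-x) * x ^ p))
        - ∫ x in Ioi a, Real.exp (-x) * x ^ p|
      ≤ |∫ x in Ioc 0 a, (Real.exp (-x) * x ^ p * (1 - x/a) ^ p - Real.exp (-x) * x ^ p)|
        + |∫ x in Ioi a, Real.exp (-x) * x ^ p| := abs_sub _ _
    _ ≤ (M/a) * Real.Gamma (p+2) + (1/a) * Real.Gamma (p+2) := by
        rw [abs_of_nonneg hnb2]; linarith
    _ = ((M + 1) * Real.Gamma (p+2) / (2*δ)) / T := hfinal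


lemma cov_lemma (p δ T : ℝ) (hδ : 0 < δ) (hT : 0 < T) :
    ∫ t in (-T)..T, Real.exp (δ*t) * (T^2 - t^2) ^ p
    = Real.exp (δ*T) * δ⁻¹ * (2*T/δ) ^ p *
      ∫ x in Ioc 0 (2*δ*T), Real.exp (-x) * x ^ p * (1 - x/(2*δ*T)) ^ p := by
  set g : ℝ → ℝ := fun x => Real.exp (δ*T - x) * ((x/δ) * (2*T - x/δ)) ^ p with hg
  have h1 : ∀ t : ℝ, Real.exp (δ*t) * (T^2 - t^2) ^ p = g (δ * (T - t)) := by
    intro t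
    rw [hg]
    simp only []
    congr 1
    · congr 1; ring
    · congr 1; field_simp; ring
  calc ∫ t in (-T)..T, Real.exp (δ*t) * (T^2 - t^2) ^ p
      = ∫ t in (-T)..T, g (δ * (T - t)) := by
        apply intervalIntegral.integral_congr; intro t _; exact h1 t
    _ = ∫ t in (-T)..T, (fun y => g (δ * y)) (T - t) := by norm_num
    _ = ∫ y in (T - T)..(T - (-T)), g (δ * y) := by
        rw [intervalIntegral.integral_comp_sub_left (fun y => g (δ * y)) T]
    _ = ∫ y in (0:ℝ)..(2*T), g (δ * y) := by norm_num; ring_nf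
    _ = δ⁻¹ • ∫ x in (δ*0)..(δ*(2*T)), g x := by
        rw [intervalIntegral.integral_comp_mul_left g (ne_of_gt hδ)]
    _ = δ⁻¹ * ∫ x in Ioc 0 (2*δ*T), g x := by
        rw [smul_eq_mul, mul_zero, show δ*(2*T) = 2*δ*T by ring,
          intervalIntegral.integral_of_le (by positivity)]
    _ = Real.exp (δ*T) * δ⁻¹ * (2*T/δ) ^ p *
        ∫ x in Ioc 0 (2*δ*T), Real.exp (-x) * x ^ p * (1 - x/(2*δ*T)) ^ p := by
        rw [show (∫ x in Ioc 0 (2*δ*T), g x)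
            = ∫ x in Ioc 0 (2*δ*T), (Real.exp (δ*T) * (2*T/δ) ^ p) *
              (Real.exp (-x) * x ^ p * (1 - x/(2*δ*T)) ^ p) from ?_]
        · rw [integral_const_mul]; ring
        · apply setIntegral_congr_fun measurableSet_Ioc
          intro x hx
          have hx0 : 0 < x := hx.1
          have hxa : x ≤ 2*δ*T := hx.2
          have hfac : 0 ≤ 1 - x/(2*δ*T) := by
            rw [sub_nonneg, div_le_one (by positivity)]; exact hxa
          rw [hg]
          simp only []
          have harg : (x/δ) * (2*T - x/δ) = (2*T/δ) * (x * (1 - x/(2*δ*T))) := by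
            field_simp
          rw [harg, Real.mul_rpow (by positivity) (by positivity),
            Real.mul_rpow hx0.le hfac, Real.exp_sub]
          rw [show Real.exp (δ*T) / Real.exp x = Real.exp (δ*T) * Real.exp (-x) by
            rw [Real.exp_neg]; ring]
          ring


lemma slice_lemma {V : Type*} [NormedAddCommGroup V] [InnerProductSpace ℝ V]
    [FiniteDimensional ℝ V] [MeasurableSpace V] [BorelSpace V]
    (n : ℕ) (hn : 1 ≤ n) (hdim : Module.finrank ℝ V = n + 1)
    (δ : ℝ) (w : V) (hw : ‖w‖ = 1) (T : ℝ) (hT : 0 < T) :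
    ∫ v in Metric.ball (0:V) T, Real.exp (δ * ⟪w, v⟫) =
      ∫ t in (-T)..T, Real.exp (δ*t) *
        (Real.sqrt (T^2 - t^2) ^ n * (Real.sqrt Real.pi ^ n / Real.Gamma ((n:ℝ)/2 + 1))) := by
  haveI : Nonempty (Fin n) := ⟨⟨0, hn⟩⟩
  -- orthonormal basis with b 0 = w
  obtain ⟨b, hb⟩ : ∃ b : OrthonormalBasis (Fin (n+1)) ℝ V, ∀ i ∈ ({0} : Set (Fin (n+1))), b i = (fun _ => w) i := by
    apply Orthonormal.exists_orthonormalBasis_extension_of_card_eq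
    · simp [hdim]
    · haveI := Set.uniqueSingleton (0 : Fin (n+1))
      constructor
      · intro i; simpa using hw
      · intro i j hij; exact absurd (Subsingleton.elim i j) hij
  have hb0 : b 0 = w := hb 0 rfl
  have hmp1 := b.measurePreserving_repr
  have hemb1 : MeasurableEmbedding ⇑b.repr := b.measurableEquiv.measurableEmbedding
  have h1 : ∫ v in Metric.ball (0:V) T, Real.exp (δ * ⟪w, v⟫)
      = ∫ y in Metric.ball (0 : EuclideanSpace ℝ (Fin (n+1))) T, Real.exp (δ * y 0) := by
    rw [← hmp1.setIntegral_preimage_emb hemb1 (fun y => Real.exp (δ * y 0)) _]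
    have hpre : (⇑b.repr) ⁻¹' Metric.ball 0 T = Metric.ball (0:V) T := by
      have := b.repr.preimage_ball (0 : EuclideanSpace ℝ (Fin (n+1))) T
      simpa using this
    rw [hpre]
    refine setIntegral_congr_fun (μ := volume) measurableSet_ball (fun v _ => ?_)
    rw [b.repr_apply_apply, hb0]
  set S : Set (Fin (n+1) → ℝ) := {x | ∑ i, (x i)^2 < T^2} with hS
  have h2 : ∫ y in Metric.ball (0 : EuclideanSpace ℝ (Fin (n+1))) T, Real.exp (δ * y 0)
      = ∫ x in S, Real.exp (δ * x 0) := by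
    have hmp2 := (EuclideanSpace.volume_preserving_symm_measurableEquiv_toLp (Fin (n+1))).symm
    have hemb2 : MeasurableEmbedding ⇑(MeasurableEquiv.toLp 2 (Fin (n+1) → ℝ)).symm.symm :=
      (MeasurableEquiv.toLp 2 (Fin (n+1) → ℝ)).symm.symm.measurableEmbedding
    rw [← hmp2.setIntegral_preimage_emb hemb2 (fun y => Real.exp (δ * y 0)) _]
    have hpre : (⇑(MeasurableEquiv.toLp 2 (Fin (n+1) → ℝ)).symm.symm) ⁻¹' (Metric.ball 0 T) = S := by
      ext x
      simp only [Set.mem_preimage, Metric.mem_ball, dist_zero_right, hS, Set.mem_setOf_eq]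
      rw [EuclideanSpace.norm_eq]
      rw [Real.sqrt_lt' hT]
      simp [Real.norm_eq_abs, sq_abs, MeasurableEquiv.symm_symm, MeasurableEquiv.toLp_apply, PiLp.toLp_apply]
    rw [hpre]
    refine setIntegral_congr_fun ?_ (fun x _ => ?_)
    · exact measurableSet_lt (by fun_prop) measurable_const
    · simp [MeasurableEquiv.symm_symm, MeasurableEquiv.toLp_apply, PiLp.toLp_apply]
  set A : Set (ℝ × (Fin n → ℝ)) := {z | z.1^2 + ∑ j, (z.2 j)^2 < T^2} with hA
  have h3 : ∫ x in S, Real.exp (δ * x 0) = ∫ z in A, Real.exp (δ * z.1) := by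
    have hmp3 := (volume_preserving_piFinSuccAbove (fun _ : Fin (n+1) => ℝ) 0).symm
    have hemb3 : MeasurableEmbedding ⇑(MeasurableEquiv.piFinSuccAbove (fun _ : Fin (n+1) => ℝ) 0).symm :=
      (MeasurableEquiv.piFinSuccAbove (fun _ : Fin (n+1) => ℝ) 0).symm.measurableEmbedding
    rw [← hmp3.setIntegral_preimage_emb hemb3 (fun x => Real.exp (δ * x 0)) S]
    have hpre : (⇑(MeasurableEquiv.piFinSuccAbove (fun _ : Fin (n+1) => ℝ) 0).symm) ⁻¹' S = A := by
      ext z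
      simp [MeasurableEquiv.piFinSuccAbove_symm_apply, Fin.insertNthEquiv_zero,
        Fin.consEquiv_apply, Fin.sum_univ_succ, Fin.cons_zero, Fin.cons_succ, hS, hA]
    rw [hpre]
    refine setIntegral_congr_fun ?_ (fun z _ => ?_)
    · exact measurableSet_lt (by fun_prop) measurable_const
    · simp [MeasurableEquiv.piFinSuccAbove_symm_apply, Fin.insertNthEquiv_zero,
        Fin.consEquiv_apply, Fin.cons_zero]
  set β : ℝ := Real.sqrt Real.pi ^ n / Real.Gamma ((n:ℝ)/2 + 1) with hβ
  have hβpos : 0 < β := by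
    apply div_pos (pow_pos (Real.sqrt_pos.2 Real.pi_pos) n)
    apply Real.Gamma_pos_of_pos
    positivity
  set st : ℝ → Set (Fin n → ℝ) := fun t => {y | ∑ j, (y j)^2 < T^2 - t^2} with hst
  have hstmeas : ∀ t, MeasurableSet (st t) := fun t =>
    measurableSet_lt (by fun_prop) measurable_const
  have hAmeas : MeasurableSet A :=
    measurableSet_lt (by fun_prop) measurable_const
  have hAsub : A ⊆ (Icc (-T) T) ×ˢ (Metric.closedBall (0 : Fin n → ℝ) T) := by
    intro z hz
    have hz' : z.1^2 + ∑ j, (z.2 j)^2 < T^2 := hz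
    have hsq : ∀ j, (0:ℝ) ≤ (z.2 j)^2 := fun j => sq_nonneg _
    have hsum : (0:ℝ) ≤ ∑ j, (z.2 j)^2 := Finset.sum_nonneg fun j _ => hsq j
    constructor
    · have h1 : z.1^2 ≤ T^2 := by linarith
      constructor <;> nlinarith
    · simp only [Metric.mem_closedBall, dist_zero_right]
      rw [pi_norm_le_iff_of_nonneg hT.le]
      intro j
      have h1 : (z.2 j)^2 ≤ T^2 := by
        have : (z.2 j)^2 ≤ ∑ k, (z.2 k)^2 :=
          Finset.single_le_sum (f := fun k => (z.2 k)^2) (fun k _ => sq_nonneg _)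
            (Finset.mem_univ j)
        nlinarith
      rw [Real.norm_eq_abs, ← abs_of_pos hT, ← Real.sqrt_sq_eq_abs, ← Real.sqrt_sq_eq_abs]
      exact Real.sqrt_le_sqrt h1
  have hInt : IntegrableOn (fun z : ℝ × (Fin n → ℝ) => Real.exp (δ * z.1)) A := by
    refine IntegrableOn.mono_set ?_ hAsub
    apply ContinuousOn.integrableOn_compact (isCompact_Icc.prod (isCompact_closedBall _ _))
    exact (Real.continuous_exp.comp (continuous_const.mul continuous_fst)).continuousOn
  have h4 : ∫ z in A, Real.exp (δ * z.1)
      = ∫ t : ℝ, (volume (st t)).toReal * Real.exp (δ * t) := by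
    rw [← integral_indicator hAmeas]
    rw [show (volume : Measure (ℝ × (Fin n → ℝ))) = (volume : Measure ℝ).prod volume from rfl]
    rw [integral_prod _ ((integrable_indicator_iff hAmeas).2 hInt)]
    congr 1
    ext t
    have : (fun y => A.indicator (fun z : ℝ × (Fin n → ℝ) => Real.exp (δ * z.1)) (t, y))
        = (st t).indicator (fun _ => Real.exp (δ * t)) := by
      ext y
      by_cases hy : y ∈ st t
      · have : (t, y) ∈ A := by
          simp only [hA, Set.mem_setOf_eq]
          have := hy
          simp only [hst, Set.mem_setOf_eq] at this
          linarith
        simp [Set.indicator_of_mem, this, hy]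
      · have : (t, y) ∉ A := by
          intro hcon
          apply hy
          have h' : t^2 + ∑ j, (y j)^2 < T^2 := hcon
          simp only [hst, Set.mem_setOf_eq]
          linarith
        simp [Set.indicator_of_notMem, this, hy]
    rw [this, integral_indicator_const _ (hstmeas t)]
    simp [mul_comm]; rfl
  have h5 : ∀ t : ℝ, (volume (st t)).toReal = Real.sqrt (T^2 - t^2) ^ n * β := by
    intro t
    have hset : st t = (⇑(MeasurableEquiv.toLp 2 (Fin n → ℝ)).symm.symm) ⁻¹'
        (Metric.ball 0 (Real.sqrt (T^2 - t^2))) := by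
      ext y
      simp only [hst, Set.mem_setOf_eq, Set.mem_preimage, Metric.mem_ball, dist_zero_right]
      rw [EuclideanSpace.norm_eq]
      simp only [MeasurableEquiv.symm_symm, MeasurableEquiv.toLp_apply, PiLp.toLp_apply,
        Real.norm_eq_abs, sq_abs]
      exact (Real.sqrt_lt_sqrt_iff (Finset.sum_nonneg fun j _ => sq_nonneg _)).symm
    rw [hset, ((EuclideanSpace.volume_preserving_symm_measurableEquiv_toLp (Fin n)).symm).measure_preimage
      measurableSet_ball.nullMeasurableSet, EuclideanSpace.volume_ball]
    rw [ENNReal.toReal_mul, ENNReal.toReal_pow, ENNReal.toReal_ofReal (Real.sqrt_nonneg _),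
      ENNReal.toReal_ofReal (by positivity)]
    simp [hβ, Fintype.card_fin]
  rw [h1, h2, h3, h4]
  have hzero : ∀ t : ℝ, t ∉ Ioc (-T) T →
      Real.exp (δ*t) * (Real.sqrt (T^2 - t^2) ^ n * β) = 0 := by
    intro t ht
    have hneg : T^2 - t^2 ≤ 0 := by
      simp only [Set.mem_Ioc, not_and_or, not_lt, not_le] at ht
      rcases ht with h | h
      · nlinarith
      · nlinarith
    rw [Real.sqrt_eq_zero_of_nonpos hneg, zero_pow (by omega : n ≠ 0)]
    ring
  calc ∫ t : ℝ, (volume (st t)).toReal * Real.exp (δ*t)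
      = ∫ t : ℝ, Real.exp (δ*t) * (Real.sqrt (T^2-t^2) ^ n * β) := by
        congr 1; funext t; rw [h5 t]; ring
    _ = ∫ t in Ioc (-T) T, Real.exp (δ*t) * (Real.sqrt (T^2-t^2) ^ n * β) :=
        (setIntegral_eq_integral_of_forall_compl_eq_zero hzero).symm
    _ = ∫ t in (-T)..T, Real.exp (δ*t) * (Real.sqrt (T^2-t^2) ^ n * β) :=
        (intervalIntegral.integral_of_le (by linarith)).symm


lemma riesz_form {V : Type*} [NormedAddCommGroup V] [InnerProductSpace ℝ V]
    [FiniteDimensional ℝ V]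
    (δ : ℝ) (hδ : 0 < δ) (ℓ : V →L[ℝ] ℝ) (w : V) (hw : ‖w‖ = 1)
    (hℓw : ℓ w = δ) (hmax : ∀ v : V, ‖v‖ ≤ 1 → ℓ v ≤ δ) :
    ∀ v : V, ℓ v = δ * ⟪w, v⟫ := by
  have habs : ∀ v : V, |ℓ v| ≤ δ * ‖v‖ := by
    intro v
    rcases eq_or_ne v 0 with rfl | hv
    · simp
    · have hnv : 0 < ‖v‖ := norm_pos_iff.2 hv
      set u : V := ‖v‖⁻¹ • v with hu
      have hnu : ‖u‖ = 1 := by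
        rw [hu, norm_smul, norm_inv, norm_norm, inv_mul_cancel₀ (ne_of_gt hnv)]
      have h1 : ℓ u ≤ δ := hmax u (le_of_eq hnu)
      have h2 : ℓ (-u) ≤ δ := hmax (-u) (by rw [norm_neg]; exact le_of_eq hnu)
      rw [map_neg] at h2
      have h3 : |ℓ u| ≤ δ := abs_le.2 ⟨by linarith, h1⟩
      have h4 : v = ‖v‖ • u := by
        rw [hu, smul_smul, mul_inv_cancel₀ (ne_of_gt hnv), one_smul]
      have h5 : ℓ v = ‖v‖ * ℓ u := by
        conv_lhs => rw [h4]
        rw [_root_.map_smul, smul_eq_mul]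
      rw [h5, abs_mul, abs_of_pos hnv]
      calc ‖v‖ * |ℓ u| ≤ ‖v‖ * δ := mul_le_mul_of_nonneg_left h3 hnv.le
        _ = δ * ‖v‖ := mul_comm _ _
  set y : V := (InnerProductSpace.toDual ℝ V).symm ℓ with hy
  have hyv : ∀ v : V, ⟪y, v⟫ = ℓ v := fun v => InnerProductSpace.toDual_symm_apply
  have hyw : ⟪y, w⟫ = δ := by rw [hyv, hℓw]
  have hny_le : ‖y‖ ≤ δ := by
    have h1 : ⟪y, y⟫ = ℓ y := hyv y
    have h2 : ‖y‖ * ‖y‖ ≤ δ * ‖y‖ := by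
      rw [← real_inner_self_eq_norm_mul_norm, h1]
      exact le_trans (le_abs_self _) (habs y)
    rcases eq_or_lt_of_le (norm_nonneg y) with h0 | h0
    · rw [← h0]; exact hδ.le
    · exact le_of_mul_le_mul_right h2 h0
  have hny_ge : δ ≤ ‖y‖ := by
    have := real_inner_le_norm y w
    rw [hyw, hw, mul_one] at this
    exact this
  have hny : ‖y‖ = δ := le_antisymm hny_le hny_ge
  have hcs : ⟪y, w⟫ = ‖y‖ * ‖w‖ := by rw [hyw, hny, hw, mul_one]
  have hpar := inner_eq_norm_mul_iff_real.1 hcs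
  rw [hw, hny, one_smul] at hpar
  intro v
  rw [← hyv, hpar, real_inner_smul_left]

theorem integral_exp_linear_ball_leading_asymptotic
    {V : Type*} [NormedAddCommGroup V] [InnerProductSpace ℝ V]
    [FiniteDimensional ℝ V] [MeasurableSpace V] [BorelSpace V]
    (r : ℕ) (hr : 2 ≤ r) (hdim : Module.finrank ℝ V = r)
    (δ : ℝ) (hδ : 0 < δ)
    (ω₀ : ℝ)
    (hω₀ : ω₀ = 2 ^ (((r : ℝ) - 1) / 2) * δ ^ (-((r : ℝ) + 1) / 2) *
      (Real.pi ^ (((r : ℝ) - 1) / 2) / Real.Gamma (((r : ℝ) - 1) / 2 + 1)) *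
      ∫ x in Set.Ici (0:ℝ), Real.exp (-x) * x ^ (((r : ℝ) - 1) / 2))
    (ℓ : V →L[ℝ] ℝ) (vlam : V) (hvlam : ‖vlam‖ = 1)
    (hℓvlam : ℓ vlam = δ) (hmax : ∀ v : V, ‖v‖ ≤ 1 → ℓ v ≤ δ) :
    ∃ C > (0:ℝ), ∀ T : ℝ, 0 < T →
      |(∫ v in Metric.ball (0 : V) T, Real.exp (ℓ v)) -
          ω₀ * T ^ (((r : ℝ) - 1) / 2) * Real.exp (δ * T)|
        ≤ C * T ^ (((r : ℝ) - 3) / 2) * Real.exp (δ * T) := by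
  have hform := riesz_form δ hδ ℓ vlam hvlam hℓvlam hmax
  set p : ℝ := ((r:ℝ) - 1)/2 with hp_def
  have hrR : (2:ℝ) ≤ (r:ℝ) := by exact_mod_cast hr
  have hp : 0 < p := by rw [hp_def]; linarith
  set n : ℕ := r - 1 with hn_def
  have hrn : r = n + 1 := by omega
  have hn1 : 1 ≤ n := by omega
  have hcast : (n:ℝ) = (r:ℝ) - 1 := by
    rw [hn_def]
    push_cast [Nat.cast_sub (by omega : 1 ≤ r)]
    ring
  have hdim' : Module.finrank ℝ V = n + 1 := by rw [hdim, hrn]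
  -- constants
  set βr : ℝ := Real.pi ^ p / Real.Gamma (p + 1) with hβr_def
  have hβrpos : 0 < βr := by
    apply div_pos (Real.rpow_pos_of_pos Real.pi_pos p)
    exact Real.Gamma_pos_of_pos (by linarith)
  have hsqrtpi : Real.sqrt Real.pi ^ n = Real.pi ^ p := by
    rw [Real.sqrt_eq_rpow, ← Real.rpow_natCast (Real.pi ^ ((1:ℝ)/2)) n,
      ← Real.rpow_mul Real.pi_pos.le, hcast]
    congr 1
    rw [hp_def]; ring
  have hio : (n:ℝ)/2 + 1 = p + 1 := by rw [hcast, hp_def]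
  set K : ℝ := (max 1 p + 1) * Real.Gamma (p+2) / (2*δ) with hK_def
  have hKpos : 0 < K := by
    apply div_pos _ (by linarith)
    apply mul_pos _ (Real.Gamma_pos_of_pos (by linarith))
    have : (1:ℝ) ≤ max 1 p := le_max_left _ _
    linarith
  set C : ℝ := βr * δ⁻¹ * 2^p * (δ^p)⁻¹ * K with hC_def
  have hδp : (0:ℝ) < δ ^ p := Real.rpow_pos_of_pos hδ p
  have h2p : (0:ℝ) < 2 ^ p := Real.rpow_pos_of_pos (by norm_num) p
  have hCpos : 0 < C := by
    rw [hC_def]; positivity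
  refine ⟨C, hCpos, fun T hT => ?_⟩
  -- rewrite ω₀
  have hIci : (∫ x in Set.Ici (0:ℝ), Real.exp (-x) * x ^ p) = Real.Gamma (p+1) := by
    rw [MeasureTheory.integral_Ici_eq_integral_Ioi, gamma_value p hp]
  have hω : ω₀ = 2^p * (δ^p * δ)⁻¹ * βr * Real.Gamma (p+1) := by
    rw [hω₀, hIci, show -((r:ℝ)+1)/2 = -(p+1) by rw [hp_def]; ring,
      Real.rpow_neg hδ.le, Real.rpow_add hδ, Real.rpow_one]
  -- step 0
  have h0 : (∫ v in Metric.ball (0:V) T, Real.exp (ℓ v))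
      = ∫ v in Metric.ball (0:V) T, Real.exp (δ * ⟪vlam, v⟫) := by
    refine setIntegral_congr_fun measurableSet_ball (fun v _ => ?_)
    rw [hform v]
  -- step 1 + 2
  have h12 : (∫ v in Metric.ball (0:V) T, Real.exp (δ * ⟪vlam, v⟫))
      = βr * ∫ t in (-T)..T, Real.exp (δ*t) * (T^2 - t^2) ^ p := by
    rw [slice_lemma n hn1 hdim' δ vlam hvlam T hT]
    rw [intervalIntegral.integral_of_le (by linarith : -T ≤ T),
      intervalIntegral.integral_of_le (by linarith : -T ≤ T)]
    rw [show (∫ t in Set.Ioc (-T) T, Real.exp (δ*t) *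
        (Real.sqrt (T^2 - t^2) ^ n * (Real.sqrt Real.pi ^ n / Real.Gamma ((n:ℝ)/2 + 1))))
        = ∫ t in Set.Ioc (-T) T, βr * (Real.exp (δ*t) * (T^2 - t^2) ^ p) from ?_]
    · rw [integral_const_mul]
    · refine setIntegral_congr_fun measurableSet_Ioc (fun t ht => ?_)
      have htnn : 0 ≤ T^2 - t^2 := by
        rcases ht with ⟨h1, h2⟩
        nlinarith
      have hsq : Real.sqrt (T^2 - t^2) ^ n = (T^2 - t^2) ^ p := by
        rw [Real.sqrt_eq_rpow, ← Real.rpow_natCast ((T^2-t^2) ^ ((1:ℝ)/2)) n,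
          ← Real.rpow_mul htnn, hcast]
        congr 1
        rw [hp_def]; ring
      rw [hsq, hsqrtpi, hio, hβr_def]
      ring
  -- step 3
  have h3 := cov_lemma p δ T hδ hT
  set J : ℝ := ∫ x in Set.Ioc 0 (2*δ*T), Real.exp (-x) * x ^ p * (1 - x/(2*δ*T)) ^ p with hJ_def
  have hJb := J_bound p δ hp hδ T hT
  have h2Tδ : (2*T/δ)^p = 2^p * T^p * (δ^p)⁻¹ := by
    rw [Real.div_rpow (by positivity) hδ.le, Real.mul_rpow (by norm_num) hT.le]
    ring
  -- main identity
  have hmain : (∫ v in Metric.ball (0:V) T, Real.exp (ℓ v)) - ω₀ * T^p * Real.exp (δ*T)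
      = (βr * δ⁻¹ * 2^p * (δ^p)⁻¹ * T^p * Real.exp (δ*T)) * (J - Real.Gamma (p+1)) := by
    rw [h0, h12, h3, hω, h2Tδ, mul_inv]
    ring
  rw [show ((r:ℝ)-3)/2 = p - 1 by rw [hp_def]; ring]
  rw [hmain, abs_mul]
  have hTp : (0:ℝ) < T ^ p := Real.rpow_pos_of_pos hT p
  have hpos : (0:ℝ) < βr * δ⁻¹ * 2^p * (δ^p)⁻¹ * T^p * Real.exp (δ*T) := by positivity
  rw [abs_of_pos hpos]
  have hfin : (βr * δ⁻¹ * 2^p * (δ^p)⁻¹ * T^p * Real.exp (δ*T)) * (K / T)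
      = C * T ^ (p-1) * Real.exp (δ*T) := by
    rw [Real.rpow_sub hT, Real.rpow_one, hC_def]
    field_simp
  calc (βr * δ⁻¹ * 2^p * (δ^p)⁻¹ * T^p * Real.exp (δ*T)) * |J - Real.Gamma (p+1)|
      ≤ (βr * δ⁻¹ * 2^p * (δ^p)⁻¹ * T^p * Real.exp (δ*T)) * (K / T) :=
        mul_le_mul_of_nonneg_left hJb hpos.le
    _ = C * T ^ (p-1) * Real.exp (δ*T) := hfin
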